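/- Let f : ℝ → ℝ be n-times differentiable. Then for every real x, the n-th derivative of the composite function x ↦ f(x²) satisfies dⁿ/dxⁿ [f(x²)] = n! · Σ_{k=0}^{⌊n/2⌋} (2x)^{n−2k} / (k! (n−2k)!) · f^{(n−k)}(x²), where f^{(m)} denotes the m-th derivative of f. -/

import Mathlib

open Finset

noncomputable def cc (n k : ℕ) : ℝ :=
  if 2 * k ≤ n then (n.factorial : ℝ) / (k.factorial * (n - 2 * k).factorial) else 0

lemma cc_zero (n : ℕ) : cc n 0 = 1 := by
  simp [cc, Nat.factorial_ne_zero]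

lemma cc_of_gt {n k : ℕ} (h : n < 2 * k) : cc n k = 0 := by
  simp [cc, not_le.mpr h]

lemma cc_of_le {n k : ℕ} (h : 2 * k ≤ n) :
    cc n k = (n.factorial : ℝ) / (k.factorial * (n - 2 * k).factorial) := by
  simp [cc, h]

lemma cc_rec (n k : ℕ) :
    cc (n + 1) (k + 1) = 2 * ((n - 2 * k : ℕ) : ℝ) * cc n k + cc n (k + 1) := by
  rcases le_or_gt (2 * (k + 1)) n with h | h
  · rw [cc_of_le (by omega), cc_of_le (by omega), cc_of_le h]
    obtain ⟨m, hm⟩ : ∃ m, n = 2 * k + 2 + m := ⟨n - (2*k+2), by omega⟩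
    subst hm
    have e1 : 2 * k + 2 + m + 1 - 2 * (k + 1) = m + 1 := by omega
    have e2 : 2 * k + 2 + m - 2 * k = m + 2 := by omega
    have e3 : 2 * k + 2 + m - 2 * (k + 1) = m := by omega
    rw [e1, e2, e3]
    have hk : (k.factorial : ℝ) ≠ 0 := Nat.cast_ne_zero.mpr k.factorial_ne_zero
    have hk1 : ((k+1).factorial : ℝ) ≠ 0 := Nat.cast_ne_zero.mpr (k+1).factorial_ne_zero
    have hm0 : (m.factorial : ℝ) ≠ 0 := Nat.cast_ne_zero.mpr m.factorial_ne_zero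
    have hm1 : ((m+1).factorial : ℝ) ≠ 0 := Nat.cast_ne_zero.mpr (m+1).factorial_ne_zero
    have hm2 : ((m+2).factorial : ℝ) ≠ 0 := Nat.cast_ne_zero.mpr (m+2).factorial_ne_zero
    rw [show (2*k+2+m+1).factorial = (2*k+2+m+1) * (2*k+2+m).factorial from Nat.factorial_succ _,
        show (m+2).factorial = (m+2) * (m+1).factorial from Nat.factorial_succ _,
        show (m+1).factorial = (m+1) * m.factorial from Nat.factorial_succ _,
        show (k+1).factorial = (k+1) * k.factorial from Nat.factorial_succ _]
    push_cast
    field_simp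
    ring
  · rcases le_or_gt (2 * (k + 1)) (n + 1) with h2 | h2
    · -- n = 2k + 1
      have hn : n = 2 * k + 1 := by omega
      subst hn
      rw [cc_of_le (by omega), cc_of_le (by omega), cc_of_gt (by omega)]
      have e1 : 2 * k + 1 + 1 - 2 * (k + 1) = 0 := by omega
      have e2 : 2 * k + 1 - 2 * k = 1 := by omega
      rw [e1, e2]
      have hk : (k.factorial : ℝ) ≠ 0 := Nat.cast_ne_zero.mpr k.factorial_ne_zero
      rw [show (2*k+1+1).factorial = (2*k+2) * (2*k+1).factorial from Nat.factorial_succ _,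
          show (k+1).factorial = (k+1) * k.factorial from Nat.factorial_succ _]
      push_cast
      field_simp
      ring
    · rw [cc_of_gt (n := n+1) (k := k+1) (by omega), cc_of_gt (n := n) (k := k+1) h,
        show (n - 2 * k : ℕ) = 0 by omega]
      simp

lemma aux_formula (n : ℕ) :
    ∀ f : ℝ → ℝ, ContDiff ℝ n f → ∀ x : ℝ,
      iteratedDeriv n (fun t => f (t ^ 2)) x =
        ∑ k ∈ range (n + 1), cc n k * (2 * x) ^ (n - 2 * k) * iteratedDeriv (n - k) f (x ^ 2) := by
  induction n with
  | zero =>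
      intro f hf x
      simp [cc_zero]
  | succ n ih =>
      intro f hf x
      have hf' : ContDiff ℝ n f := hf.of_le (by exact_mod_cast Nat.cast_le.mpr (Nat.le_succ n))
      rw [iteratedDeriv_succ]
      have hIH : iteratedDeriv n (fun t => f (t ^ 2)) =
          fun y => ∑ k ∈ range (n + 1), cc n k * (2 * y) ^ (n - 2 * k) * iteratedDeriv (n - k) f (y ^ 2) :=
        funext fun y => ih f hf' y
      rw [hIH]
      -- derivative of each term
      have hterm : ∀ k ∈ range (n + 1),
          HasDerivAt (fun y : ℝ => cc n k * (2 * y) ^ (n - 2 * k) * iteratedDeriv (n - k) f (y ^ 2))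
            (2 * ((n - 2 * k : ℕ) : ℝ) * cc n k * (2 * x) ^ (n - 2 * k - 1) * iteratedDeriv (n - k) f (x ^ 2)
              + cc n k * (2 * x) ^ (n - 2 * k) * (2 * x) * iteratedDeriv (n + 1 - k) f (x ^ 2)) x := by
        intro k hk
        have hkn : k ≤ n := by simpa using Nat.lt_succ_iff.mp (mem_range.mp hk)
        have h2x : HasDerivAt (fun y : ℝ => 2 * y) 2 x := by
          simpa using (hasDerivAt_id x).const_mul 2
        have hpow : HasDerivAt (fun y : ℝ => (2 * y) ^ (n - 2 * k))
            (((n - 2 * k : ℕ) : ℝ) * (2 * x) ^ (n - 2 * k - 1) * 2) x := h2x.pow _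
        have hdiff : Differentiable ℝ (iteratedDeriv (n - k) f) := by
          apply hf.differentiable_iteratedDeriv
          have h1 : (n - k) < (n + 1) := by omega
          exact_mod_cast h1
        have hg : HasDerivAt (iteratedDeriv (n - k) f)
            (iteratedDeriv (n - k + 1) f (x ^ 2)) (x ^ 2) := by
          have := (hdiff (x ^ 2)).hasDerivAt
          rwa [show deriv (iteratedDeriv (n - k) f) (x^2) = iteratedDeriv (n - k + 1) f (x^2) by
            rw [iteratedDeriv_succ]] at this
        have hsq : HasDerivAt (fun y : ℝ => y ^ 2) (2 * x) x := by
          simpa using hasDerivAt_pow 2 x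
        have hcomp : HasDerivAt (fun y : ℝ => iteratedDeriv (n - k) f (y ^ 2))
            (iteratedDeriv (n - k + 1) f (x ^ 2) * (2 * x)) x :=
          HasDerivAt.comp (x := x) (h := fun y : ℝ => y ^ 2)
            (h₂ := iteratedDeriv (n - k) f) hg hsq
        have := ((hpow.const_mul (cc n k)).fun_mul hcomp)
        have hnk1 : n - k + 1 = n + 1 - k := by omega
        rw [hnk1] at this
        convert this using 1
        · rfl
        · rfl
        · ring
      have hsum := HasDerivAt.fun_sum hterm
      rw [hsum.deriv]
      -- now algebra
      rw [Finset.sum_add_distrib]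
      rw [Finset.sum_range_succ' (fun k => cc (n+1) k * (2 * x) ^ (n + 1 - 2 * k) * iteratedDeriv (n + 1 - k) f (x ^ 2)) (n+1)]
      have hB : ∑ k ∈ range (n + 1), cc n k * (2 * x) ^ (n - 2 * k) * (2 * x) * iteratedDeriv (n + 1 - k) f (x ^ 2)
          = ∑ k ∈ range (n + 2), cc n k * (2 * x) ^ (n - 2 * k) * (2 * x) * iteratedDeriv (n + 1 - k) f (x ^ 2) := by
        conv_rhs => rw [Finset.sum_range_succ]
        rw [cc_of_gt (n := n) (k := n+1) (by omega)]
        ring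
      rw [hB, Finset.sum_range_succ' (fun k => cc n k * (2 * x) ^ (n - 2 * k) * (2 * x) * iteratedDeriv (n + 1 - k) f (x ^ 2)) (n+1)]
      have hT0 : cc (n+1) 0 * (2 * x) ^ (n + 1 - 2 * 0) * iteratedDeriv (n + 1 - 0) f (x ^ 2)
          = cc n 0 * (2 * x) ^ (n - 2 * 0) * (2 * x) * iteratedDeriv (n + 1 - 0) f (x ^ 2) := by
        rw [cc_zero, cc_zero]
        simp only [Nat.mul_zero, Nat.sub_zero, pow_succ]
        ring
      have hTk : ∀ k ∈ range (n + 1),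
          cc (n+1) (k+1) * (2 * x) ^ (n + 1 - 2 * (k+1)) * iteratedDeriv (n + 1 - (k+1)) f (x ^ 2)
          = 2 * ((n - 2 * k : ℕ) : ℝ) * cc n k * (2 * x) ^ (n - 2 * k - 1) * iteratedDeriv (n - k) f (x ^ 2)
            + cc n (k+1) * (2 * x) ^ (n - 2 * (k+1)) * (2 * x) * iteratedDeriv (n + 1 - (k+1)) f (x ^ 2) := by
        intro k hk
        have e1 : n + 1 - 2 * (k + 1) = n - 2 * k - 1 := by omega
        have e2 : n + 1 - (k + 1) = n - k := by omega
        rw [e1, e2, cc_rec]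
        rcases le_or_gt (2 * (k + 1)) n with h | h
        · have e3 : n - 2 * k - 1 = (n - 2 * (k + 1)) + 1 := by omega
          rw [e3, pow_succ]
          ring
        · rw [cc_of_gt (n := n) (k := k+1) h]
          ring
      rw [Finset.sum_congr rfl hTk]
      rw [Finset.sum_add_distrib]
      rw [hT0]
      ring

theorem iteratedDeriv_comp_sq (n : ℕ) (f : ℝ → ℝ) (hf : ContDiff ℝ n f) (x : ℝ) :
    iteratedDeriv n (fun t => f (t ^ 2)) x =
      (n.factorial : ℝ) * ∑ k ∈ Finset.range (n / 2 + 1),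
        (2 * x) ^ (n - 2 * k) / ((k.factorial : ℝ) * (n - 2 * k).factorial) *
          iteratedDeriv (n - k) f (x ^ 2) := by
  rw [aux_formula n f hf x, Finset.mul_sum]
  rw [← Finset.sum_subset (Finset.range_subset_range.mpr (by omega : n / 2 + 1 ≤ n + 1))
    (fun k _ hk => by
      rw [cc_of_gt (n := n) (k := k) (by simp at hk ⊢; omega)]
      ring)]
  refine Finset.sum_congr rfl fun k hk => ?_
  rw [cc_of_le (by simp at hk; omega)]
  ring
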